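/- Let $(\Omega, \mathcal{F}, P)$ be a probability space, $(\Omega_X, \mathcal{F}_X)$ a standard Borel space with $\Omega_X$ uncountable, $(\Omega_S, \mathcal{F}_S)$ a measurable space, and let $X : \Omega \to \Omega_X$, $S : \Omega \to \Omega_S$ be random elements. Suppose there exist a measurable function $f : \Omega_S \times [0,1] \to \Omega_X$ and a random variable $R$ uniform on $[0,1]$, independent of $S$, such that $X = f(S, R)$ almost surely. Then there exist a measurable function $g : \Omega_S \times [0,1] \to \Omega_X$ and a random variable $W$ uniform on $[0,1]$, independent of $S$, such that $X(\omega) = g(S(\omega), W(\omega))$ for every $\omega \in \Omega$ (surely, not merely almost surely). -/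

import Mathlib

open MeasureTheory ProbabilityTheory Set Cardinal

noncomputable section

namespace Stmt7Aux

/-- Scaled Cantor function, an injective continuous map from Cantor space into `[0,1]`
whose range has Lebesgue measure zero. -/
def q (b : ℕ → Bool) : ℝ := (2/3) * cantorFunction (1/3) b

lemma aux_nonneg (b : ℕ → Bool) (n : ℕ) : 0 ≤ cantorFunctionAux (1/3) b n :=
  cantorFunctionAux_nonneg (by norm_num)

lemma aux_le (b : ℕ → Bool) (n : ℕ) : cantorFunctionAux (1/3) b n ≤ (1/3:ℝ)^n := by
  cases h : b n
  · rw [cantorFunctionAux_false h]; positivity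
  · simp [cantorFunctionAux_true h]

lemma aux_summable (b : ℕ → Bool) : Summable (cantorFunctionAux (1/3) b) :=
  summable_cantor_function b (by norm_num) (by norm_num)

lemma geom_summable : Summable (fun n : ℕ => (1/3:ℝ)^n) :=
  summable_geometric_of_lt_one (by norm_num) (by norm_num)

lemma cantor_le (b : ℕ → Bool) : cantorFunction (1/3) b ≤ 3/2 := by
  have h := Summable.tsum_le_tsum (aux_le b) (aux_summable b) geom_summable
  have hg : ∑' n : ℕ, (1/3:ℝ)^n = 3/2 := by
    rw [tsum_geometric_of_lt_one (by norm_num) (by norm_num)]; norm_num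
  calc cantorFunction (1/3) b ≤ _ := h
    _ = 3/2 := hg

lemma cantor_nonneg (b : ℕ → Bool) : 0 ≤ cantorFunction (1/3) b :=
  tsum_nonneg (aux_nonneg b)

lemma q_mem (b : ℕ → Bool) : q b ∈ Set.Icc (0:ℝ) 1 := by
  constructor
  · have := cantor_nonneg b; unfold q; nlinarith
  · have := cantor_le b; unfold q; nlinarith

lemma q_inj : Function.Injective q := by
  intro a b h
  have h2 : cantorFunction (1/3) a = cantorFunction (1/3) b := by
    have : (2/3 : ℝ) ≠ 0 := by norm_num
    simp only [q] at h
    exact mul_left_cancel₀ this h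
  exact cantorFunction_injective (by norm_num) (by norm_num) h2

lemma q_cont : Continuous q := by
  apply Continuous.mul continuous_const
  have : (fun b => cantorFunction (1/3) b) = fun b => ∑' n, cantorFunctionAux (1/3) b n := rfl
  rw [show (cantorFunction (1/3)) = fun b => ∑' n, cantorFunctionAux (1/3) b n from rfl]
  apply continuous_tsum (u := fun n : ℕ => (1/3:ℝ)^n)
  · intro n
    have : (fun b : ℕ → Bool => cantorFunctionAux (1/3) b n)
        = (fun v : Bool => cond v ((1/3:ℝ)^n) 0) ∘ (fun b : ℕ → Bool => b n) := rfl
    rw [this]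
    exact Continuous.comp (continuous_of_discreteTopology) (continuous_apply n)
  · exact geom_summable
  · intro n b
    rw [Real.norm_eq_abs, abs_of_nonneg (aux_nonneg b n)]
    exact aux_le b n

/-- partial sums -/
def L (b : ℕ → Bool) (n : ℕ) : ℝ := (2/3) * ∑ k ∈ Finset.range n, cantorFunctionAux (1/3) b k

lemma q_mem_Icc (b : ℕ → Bool) (n : ℕ) : q b ∈ Set.Icc (L b n) (L b n + (1/3)^n) := by
  have hsplit := Summable.sum_add_tsum_nat_add n (aux_summable b)
  set t := ∑' k, cantorFunctionAux (1/3) b (k + n) with ht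
  have hq : q b = L b n + (2/3) * t := by
    unfold q L
    rw [show cantorFunction (1/3) b = ∑' i, cantorFunctionAux (1/3) b i from rfl, ← hsplit]
    ring
  have ht0 : 0 ≤ t := tsum_nonneg (fun k => aux_nonneg b _)
  have hts : Summable (fun k : ℕ => cantorFunctionAux (1/3) b (k + n)) :=
    (summable_nat_add_iff n).2 (aux_summable b)
  have htg : Summable (fun k : ℕ => (1/3:ℝ)^(k+n)) := by
    simpa [pow_add] using geom_summable.mul_right ((1/3:ℝ)^n)
  have ht1 : t ≤ (3/2) * (1/3:ℝ)^n := by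
    have h := Summable.tsum_le_tsum (fun k => aux_le b (k+n)) hts htg
    have : ∑' k : ℕ, (1/3:ℝ)^(k+n) = (3/2) * (1/3:ℝ)^n := by
      simp_rw [pow_add]
      rw [tsum_mul_right, tsum_geometric_of_lt_one (by norm_num) (by norm_num)]
      norm_num
    rw [this] at h
    exact h.trans (le_of_eq rfl)
  constructor
  · rw [hq]; nlinarith
  · rw [hq]; nlinarith

lemma L_prefix (b : ℕ → Bool) (n : ℕ) :
    L b n = L (fun k => if h : k < n then b k else false) n := by
  unfold L
  congr 1
  apply Finset.sum_congr rfl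
  intro k hk
  rw [Finset.mem_range] at hk
  exact cantorFunctionAux_eq (by simp [hk])

lemma range_q_null : volume (Set.range q) = 0 := by
  have key : ∀ n : ℕ, volume (Set.range q) ≤ ENNReal.ofReal ((2/3:ℝ)^n) := by
    intro n
    have hcover : Set.range q ⊆ ⋃ v : Fin n → Bool,
        Set.Icc (L (fun k => if h : k < n then v ⟨k, h⟩ else false) n)
          (L (fun k => if h : k < n then v ⟨k, h⟩ else false) n + (1/3)^n) := by
      rintro x ⟨b, rfl⟩
      refine Set.mem_iUnion.2 ⟨fun k => b k, ?_⟩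
      have : (fun k => if h : k < n then b ↑(⟨k, h⟩ : Fin n) else false)
          = (fun k => if h : k < n then b k else false) := rfl
      rw [this, ← L_prefix]
      exact q_mem_Icc b n
    calc volume (Set.range q)
        ≤ ∑' v : Fin n → Bool, volume (Set.Icc (L (fun k => if h : k < n then v ⟨k, h⟩ else false) n)
            (L (fun k => if h : k < n then v ⟨k, h⟩ else false) n + (1/3)^n)) :=
          (measure_mono hcover).trans (measure_iUnion_le _)
      _ = ∑' _v : Fin n → Bool, ENNReal.ofReal ((1/3:ℝ)^n) := by
          apply tsum_congr; intro v
          rw [Real.volume_Icc]; congr 1; ring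
      _ = ENNReal.ofReal ((2/3:ℝ)^n) := by
          rw [tsum_fintype, Finset.sum_const, nsmul_eq_mul]
          rw [← ENNReal.ofReal_natCast, ← ENNReal.ofReal_mul (by positivity)]
          congr 1
          simp only [Finset.card_univ, Fintype.card_fun, Fintype.card_bool, Fintype.card_fin]
          push_cast
          rw [← mul_pow]; norm_num
  have htend : Filter.Tendsto (fun n : ℕ => ENNReal.ofReal ((2/3:ℝ)^n)) Filter.atTop (nhds 0) := by
    rw [show (0 : ENNReal) = ENNReal.ofReal 0 by simp]
    exact (ENNReal.continuous_ofReal.tendsto 0).comp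
      (tendsto_pow_atTop_nhds_zero_of_lt_one (by norm_num) (by norm_num))
  have := ge_of_tendsto' htend key
  simpa using this

/-- The embedding of an uncountable standard Borel space into the unit interval
with null range. -/
lemma exists_null_embedding (ΩX : Type*) [MeasurableSpace ΩX] [StandardBorelSpace ΩX]
    [Uncountable ΩX] :
    ∃ E : ΩX → unitInterval, MeasurableEmbedding E ∧ volume (Set.range E) = 0 := by
  have h : ¬ Countable ΩX := not_countable
  let e : ΩX ≃ᵐ (ℕ → Bool) := PolishSpace.measurableEquivNatBoolOfNotCountable h
  let q' : (ℕ → Bool) → unitInterval := fun b => ⟨q b, q_mem b⟩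
  have hq'm : Measurable q' := (q_cont.measurable).subtype_mk
  have hq'i : Function.Injective q' := fun a b hab => q_inj (congrArg Subtype.val hab)
  have hq'emb : MeasurableEmbedding q' := hq'm.measurableEmbedding hq'i
  refine ⟨q' ∘ e, hq'emb.comp e.measurableEmbedding, ?_⟩
  have hr : Set.range (q' ∘ e) = Set.range q' := by
    rw [Set.range_comp, e.surjective.range_eq, Set.image_univ]
  rw [hr]
  have hcoe : MeasurableEmbedding (Subtype.val : unitInterval → ℝ) :=
    MeasurableEmbedding.subtype_coe measurableSet_Icc
  rw [unitInterval.volume_def, Measure.comap_apply _ Subtype.val_injective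
    (fun s hs => hcoe.measurableSet_image' hs) _ hq'emb.measurableSet_range]
  have : Subtype.val '' Set.range q' ⊆ Set.range q := by
    rintro x ⟨y, ⟨b, rfl⟩, rfl⟩
    exact ⟨b, rfl⟩
  exact measure_mono_null this range_q_null

end Stmt7Aux

end

open MeasureTheory ProbabilityTheory

/-- upgrading Kallenberg's representation X = f(S,R) from almost surely
to surely. -/
theorem stmt_7 {Ω : Type*} [MeasurableSpace Ω] (P : Measure Ω) [IsProbabilityMeasure P]
    {ΩX : Type*} [MeasurableSpace ΩX] [StandardBorelSpace ΩX] [Uncountable ΩX]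
    {ΩS : Type*} [MeasurableSpace ΩS]
    (X : Ω → ΩX) (S : Ω → ΩS) (hX : Measurable X) (hS : Measurable S)
    (hrep : ∃ (f : ΩS × unitInterval → ΩX) (R : Ω → unitInterval),
      Measurable f ∧ Measurable R ∧
      Measure.map R P = (volume : Measure unitInterval) ∧
      IndepFun R S P ∧ ∀ᵐ ω ∂P, X ω = f (S ω, R ω)) :
    ∃ (g : ΩS × unitInterval → ΩX) (W : Ω → unitInterval),
      Measurable g ∧ Measurable W ∧
      Measure.map W P = (volume : Measure unitInterval) ∧
      IndepFun W S P ∧ ∀ ω, X ω = g (S ω, W ω) := by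
  classical
  obtain ⟨f, R, hf, hR, hRvol, hRS, hae⟩ := hrep
  obtain ⟨E, hE, hEnull⟩ := Stmt7Aux.exists_null_embedding ΩX
  haveI : Nonempty ΩX := by
    by_contra h
    rw [not_nonempty_iff] at h
    exact (not_countable (α := ΩX)) inferInstance
  -- measurable retraction
  obtain ⟨F, hF, hFE⟩ := hE.exists_measurable_extend measurable_id (fun _ => inferInstance)
  -- the exceptional set
  set s : Set Ω := {ω | X ω = f (S ω, R ω)} ∩ (R ⁻¹' (Set.range E))ᶜ with hs_def
  have hAmeas : MeasurableSet {ω | X ω = f (S ω, R ω)} := by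
    letI := upgradeStandardBorel ΩX
    exact MeasureTheory.StronglyMeasurable.measurableSet_eq_fun hX.stronglyMeasurable
      ((hf.comp (hS.prodMk hR)).stronglyMeasurable)
  have hsmeas : MeasurableSet s :=
    hAmeas.inter ((hR hE.measurableSet_range).compl)
  set W : Ω → unitInterval := s.piecewise R (E ∘ X) with hW_def
  have hWmeas : Measurable W := Measurable.piecewise hsmeas hR (hE.measurable.comp hX)
  -- W = R almost surely
  have hRE : ∀ᵐ ω ∂P, R ω ∉ Set.range E := by
    rw [ae_iff]
    have : {ω | ¬ R ω ∉ Set.range E} = R ⁻¹' (Set.range E) := by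
      ext ω; simp
    rw [this, ← Measure.map_apply hR hE.measurableSet_range, hRvol]
    exact hEnull
  have hWR : W =ᵐ[P] R := by
    filter_upwards [hae, hRE] with ω h1 h2
    exact Set.piecewise_eq_of_mem _ _ _ ⟨h1, h2⟩
  refine ⟨fun p => if p.2 ∈ Set.range E then F p.2 else f p, W, ?_, hWmeas, ?_, ?_, ?_⟩
  · -- measurability of g
    have ht : MeasurableSet {p : ΩS × unitInterval | p.2 ∈ Set.range E} :=
      measurable_snd hE.measurableSet_range
    exact Measurable.ite ht (hF.comp measurable_snd) hf
  · rw [Measure.map_congr hWR, hRvol]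
  · exact hRS.congr hWR.symm (Filter.EventuallyEq.refl _ _)
  · intro ω
    by_cases hω : ω ∈ s
    · have hWω : W ω = R ω := Set.piecewise_eq_of_mem _ _ _ hω
      have h2 : R ω ∉ Set.range E := hω.2
      simp only [hWω, h2, if_neg, if_false]
      exact hω.1
    · have hWω : W ω = E (X ω) := Set.piecewise_eq_of_notMem _ _ _ hω
      have h2 : E (X ω) ∈ Set.range E := ⟨X ω, rfl⟩
      simp only [hWω, h2, if_true]
      exact (congrFun hFE (X ω)).symm
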